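/- Let I be a finite poset that is tree-like. Then for every category C with the amalgamation property, every diagram F : I → C has a cocone. -/

import Mathlib

open CategoryTheory

universe v u

/-- A subset of a poset is connected: nonempty, and any two of its elements are
joined by a zigzag of comparabilities within the subset. -/
def ConnIn {α : Type*} [PartialOrder α] (s : Set α) : Prop :=
  s.Nonempty ∧ ∀ x ∈ s, ∀ y ∈ s,
    Relation.ReflTransGen (fun a b => a ∈ s ∧ b ∈ s ∧ (a ≤ b ∨ b ≤ a)) x y

/-- `K` is a connected component of the subset `s` of a poset: the set of
elements of `s` joined within `s` to some fixed element of `s`. -/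
def IsComp {α : Type*} [PartialOrder α] (s K : Set α) : Prop :=
  ∃ x ∈ s, K = {y | y ∈ s ∧
    Relation.ReflTransGen (fun a b => a ∈ s ∧ b ∈ s ∧ (a ≤ b ∨ b ≤ a)) x y}

/-- The inductive class of tree-like subsets of a poset: `s` is tree-like iff
it has a minimal element `b` such that every connected component `K` of
`s \ {b}` is tree-like and the part of `K` lying above `b` is connected (and
nonempty).  This is exactly the inductive rule: a tree-like poset is a disjoint
union of tree-like posets `K₁, …, Kₙ` with connected upward-closed subsets
`Uₖ ⊆ Kₖ`, together with a new bottom point lying below exactly the `Uₖ`. -/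
inductive TreeLike {α : Type*} [PartialOrder α] : Set α → Prop
  | mk (s : Set α) (b : α) (hb : b ∈ s)
      (hmin : ∀ x ∈ s, ¬ x < b)
      (hconn : ∀ K : Set α, IsComp (s \ {b}) K → ConnIn {x | x ∈ K ∧ b < x})
      (hcomp : ∀ K : Set α, IsComp (s \ {b}) K → TreeLike K) : TreeLike s

lemma amalg {C : Type u} [Category.{v} C]
    (AP : ∀ {A B D : C} (f : A ⟶ B) (g : A ⟶ D),
      ∃ (X : C) (h : B ⟶ X) (k : D ⟶ X), f ≫ h = g ≫ k)
    {ι : Type} [Finite ι] {A : C} {X : ι → C} (f : ∀ i, A ⟶ X i) :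
    ∃ (Y : C) (h : A ⟶ Y) (g : ∀ i, X i ⟶ Y), ∀ i, f i ≫ g i = h := by
  classical
  cases nonempty_fintype ι
  suffices H : ∀ S : Finset ι, ∃ (Y : C) (h : A ⟶ Y) (g : ∀ i ∈ S, X i ⟶ Y),
      ∀ i (hi : i ∈ S), f i ≫ g i hi = h by
    obtain ⟨Y, h, g, hg⟩ := H Finset.univ
    exact ⟨Y, h, fun i => g i (Finset.mem_univ i), fun i => hg i _⟩
  intro S
  induction S using Finset.induction_on with
  | empty =>
      exact ⟨A, 𝟙 A, fun i hi => absurd hi (Finset.notMem_empty i),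
        fun i hi => absurd hi (Finset.notMem_empty i)⟩
  | @insert a S ha IH =>
      obtain ⟨Y, h, g, hg⟩ := IH
      obtain ⟨Z, p, q, hpq⟩ := AP (f a) h
      refine ⟨Z, h ≫ q, fun i hi =>
        if hia : i = a then eqToHom (by rw [hia]) ≫ p
        else g i (by rcases Finset.mem_insert.mp hi with h1 | h1; exact absurd h1 hia; exact h1) ≫ q, ?_⟩
      intro i hi
      by_cases hia : i = a
      · subst hia
        simp [hpq]
      · simp only [dif_neg hia]; rw [← Category.assoc, hg i]

lemma key {α : Type} [Finite α] [PartialOrder α]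
    {C : Type u} [Category.{v} C]
    (AP : ∀ {A B D : C} (f : A ⟶ B) (g : A ⟶ D),
      ∃ (X : C) (h : B ⟶ X) (k : D ⟶ X), f ≫ h = g ≫ k)
    (F : α ⥤ C) :
    ∀ s : Set α, TreeLike s →
    ∃ (X : C) (c : ∀ i ∈ s, F.obj i ⟶ X),
      ∀ i (hi : i ∈ s) j (hj : j ∈ s) (hij : i ≤ j),
        F.map (homOfLE hij) ≫ c j hj = c i hi := by
  intro s htree
  induction htree with
  | mk s b hb hmin hconn hcomp IH =>
    classical
    set s' := s \ {b} with hs'def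
    -- the set of connected components
    let ι := {K : Set α // IsComp s' K}
    have hchoice : ∀ k : ι, ∃ (X : C) (c : ∀ i ∈ k.1, F.obj i ⟶ X),
        ∀ i (hi : i ∈ k.1) j (hj : j ∈ k.1) (hij : i ≤ j),
          F.map (homOfLE hij) ≫ c j hj = c i hi := fun k => IH k.1 k.2
    choose X cc hcc using hchoice
    have hU : ∀ k : ι, ConnIn {x | x ∈ k.1 ∧ b < x} := fun k => hconn k.1 k.2
    choose u hu using fun k : ι => (hU k).1
    -- the leg from the bottom to each component's cocone
    let fm : ∀ k : ι, F.obj b ⟶ X k :=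
      fun k => F.map (homOfLE (hu k).2.le) ≫ cc k (u k) (hu k).1
    -- independence of the choice of upper element
    have hind : ∀ (k : ι) v (hv : v ∈ k.1) (hbv : b < v),
        F.map (homOfLE hbv.le) ≫ cc k v hv = fm k := by
      intro k v hv hbv
      have step : ∀ x y (hx : x ∈ {x | x ∈ k.1 ∧ b < x}) (hy : y ∈ {x | x ∈ k.1 ∧ b < x}),
          x ≤ y →
          F.map (homOfLE hx.2.le) ≫ cc k x hx.1 = F.map (homOfLE hy.2.le) ≫ cc k y hy.1 := by
        intro x y hx hy hxy
        rw [← hcc k x hx.1 y hy.1 hxy, ← Category.assoc, ← F.map_comp, homOfLE_comp]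
      have const : ∀ {x y : α},
          Relation.ReflTransGen (fun a c => a ∈ {x | x ∈ k.1 ∧ b < x} ∧
            c ∈ {x | x ∈ k.1 ∧ b < x} ∧ (a ≤ c ∨ c ≤ a)) x y →
          ∀ (hx : x ∈ {x | x ∈ k.1 ∧ b < x}) (hy : y ∈ {x | x ∈ k.1 ∧ b < x}),
          F.map (homOfLE hx.2.le) ≫ cc k x hx.1 = F.map (homOfLE hy.2.le) ≫ cc k y hy.1 := by
        intro x y hxy
        induction hxy with
        | refl => intro hx hy; rfl
        | @tail m y hxm hmy ih =>
            intro hx hy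
            refine (ih hx hmy.1).trans ?_
            rcases hmy.2.2 with h1 | h1
            · exact step m y hmy.1 hy h1
            · exact (step y m hy hmy.1 h1).symm
      exact (const ((hU k).2 (u k) (hu k) v ⟨hv, hbv⟩) (hu k) ⟨hv, hbv⟩).symm
    -- amalgamate all components
    obtain ⟨Y, hm, g, hg⟩ := amalg AP fm
    -- the component of an element
    let comp : α → Set α := fun x => {y | y ∈ s' ∧
      Relation.ReflTransGen (fun a c => a ∈ s' ∧ c ∈ s' ∧ (a ≤ c ∨ c ≤ a)) x y}
    have hcompIs : ∀ x, x ∈ s' → IsComp s' (comp x) := fun x hx => ⟨x, hx, rfl⟩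
    let ki : ∀ x, x ∈ s' → ι := fun x hx => ⟨comp x, hcompIs x hx⟩
    have hmem : ∀ x (hx : x ∈ s'), x ∈ (ki x hx).1 :=
      fun x hx => ⟨hx, Relation.ReflTransGen.refl⟩
    have hsymm : Symmetric (fun a c => a ∈ s' ∧ c ∈ s' ∧ (a ≤ c ∨ c ≤ a)) :=
      fun a c h => ⟨h.2.1, h.1, h.2.2.symm⟩
    have hcomp_eq : ∀ x y,
        Relation.ReflTransGen (fun a c => a ∈ s' ∧ c ∈ s' ∧ (a ≤ c ∨ c ≤ a)) x y →
        comp x = comp y := by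
      intro x y hxy
      ext z
      constructor
      · rintro ⟨hz, hr⟩
        exact ⟨hz, ((@Relation.ReflTransGen.symmetric _ _ ⟨fun a c h => hsymm h⟩).symm _ _ hxy).trans hr⟩
      · rintro ⟨hz, hr⟩
        exact ⟨hz, hxy.trans hr⟩
    -- the composite leg for elements other than b
    let cbar : ∀ x, x ∈ s' → (F.obj x ⟶ Y) :=
      fun x hx => cc (ki x hx) x (hmem x hx) ≫ g (ki x hx)
    have well : ∀ x (hx : x ∈ s') (k : ι) (hik : x ∈ k.1),
        cc k x hik ≫ g k = cbar x hx := by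
      intro x hx k hik
      obtain ⟨w, hw, hKeq⟩ := k.2
      have hke : ki x hx = k := by
        apply Subtype.ext
        have hxw : x ∈ comp w := by
          have h2 := hKeq ▸ hik
          exact h2
        show comp x = k.1
        exact (hcomp_eq w x hxw.2).symm.trans hKeq.symm
      subst hke
      rfl
    -- assemble the cocone
    refine ⟨Y, fun i hi =>
      if hib : i = b then F.map (homOfLE hib.le) ≫ hm
      else cbar i ⟨hi, hib⟩, ?_⟩
    intro i hi j hj hij
    by_cases hjb : j = b
    · have hib : i = b := by
        by_contra h
        exact hmin i hi (lt_of_le_of_ne (hij.trans hjb.le) h)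
      simp only [dif_pos hjb, dif_pos hib]
      rw [← Category.assoc, ← F.map_comp, homOfLE_comp]
    · by_cases hib : i = b
      · have hbj : b < j := lt_of_le_of_ne (hib ▸ hij) (Ne.symm hjb)
        have hj' : j ∈ s' := ⟨hj, hjb⟩
        simp only [dif_pos hib, dif_neg hjb]
        rw [← hg (ki j hj'), ← hind (ki j hj') j (hmem j hj') hbj]
        show F.map (homOfLE hij) ≫ cc (ki j hj') j (hmem j hj') ≫ g (ki j hj') = _
        simp only [← Category.assoc, ← F.map_comp, homOfLE_comp]
      · have hi' : i ∈ s' := ⟨hi, hib⟩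
        have hjb' : j ≠ b := by
          intro h
          have hle : i ≤ b := h ▸ hij
          exact (lt_or_eq_of_le hle).elim (fun hlt => absurd hlt (hmin i hi)) hib
        have hj' : j ∈ s' := ⟨hj, hjb'⟩
        simp only [dif_neg hib, dif_neg hjb']
        have hjmem : j ∈ (ki i hi').1 :=
          ⟨hj', Relation.ReflTransGen.single ⟨hi', hj', Or.inl hij⟩⟩
        rw [← well j hj' (ki i hi') hjmem, ← Category.assoc,
          hcc (ki i hi') i (hmem i hi') j hjmem hij]

/-- Every diagram over a finite tree-like poset in a category with the
amalgamation property has a cocone. -/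
theorem stmt_15 {α : Type} [Fintype α] [PartialOrder α]
    (htree : TreeLike (Set.univ : Set α))
    {C : Type u} [Category.{v} C]
    (AP : ∀ {A B D : C} (f : A ⟶ B) (g : A ⟶ D),
      ∃ (X : C) (h : B ⟶ X) (k : D ⟶ X), f ≫ h = g ≫ k)
    (F : α ⥤ C) :
    ∃ (X : C) (c : ∀ i : α, F.obj i ⟶ X),
      ∀ {i j : α} (f : i ⟶ j), F.map f ≫ c j = c i := by
  obtain ⟨X, c, hc⟩ := key AP F Set.univ htree
  refine ⟨X, fun i => c i (Set.mem_univ i), ?_⟩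
  intro i j f
  rw [Subsingleton.elim f (homOfLE (leOfHom f))]
  exact hc i _ j _ (leOfHom f)
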